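/- Let n, m, t, l be natural numbers and let A be an n×m Boolean matrix, B an n×l Boolean matrix, E a t×m Boolean matrix, and F a t×l Boolean matrix. Let M⁺ = fromBlocks A B E F be the (n+t)×(m+l) block matrix [A B; E F], and set Π = A⊙Aᵀ (the type-2 characteristic matrix of the original covering), Δ₁ = B⊙Bᵀ, Δ₂ = (fromCols E F)⊙(fromCols A B)ᵀ, Δ₃ = (fromCols A B)⊙(fromCols E F)ᵀ, and Δ₄ = (fromCols E F)⊙(fromCols E F)ᵀ. Then M⁺⊙(M⁺)ᵀ = (fromBlocks Π 1 1 1) ⊓ (fromBlocks Δ₁ Δ₃ Δ₂ Δ₄), where 1 denotes the all-true block of the appropriate size. -/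

import Mathlib

open Matrix

/-- ⊙-product of Boolean matrices: `(P⊙Q)(i,j) = ⋀ k, (P i k → Q k j)`. -/
noncomputable def bodot {α β γ : Type*} [Fintype β] (P : Matrix α β Bool) (Q : Matrix β γ Bool) :
    Matrix α γ Bool :=
  fun i j => Finset.univ.inf fun k => !(P i k) || Q k j

/-- Entrywise meet of Boolean matrices. -/
def minf {α β : Type*} (X Y : Matrix α β Bool) : Matrix α β Bool :=
  fun i j => X i j && Y i j

/-- All-true Boolean matrix. -/
def mone (α β : Type*) : Matrix α β Bool := fun _ _ => true

lemma inf_sum_type {α β γ : Type*} [Fintype α] [Fintype β] [DecidableEq α] [DecidableEq β]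
    [SemilatticeInf γ] [OrderTop γ] (f : α ⊕ β → γ) :
    Finset.univ.inf f = Finset.univ.inf (f ∘ Sum.inl) ⊓ Finset.univ.inf (f ∘ Sum.inr) := by
  rw [← Finset.univ_disjSum_univ, ← Finset.map_inl_disjUnion_map_inr, Finset.disjUnion_eq_union,
    Finset.inf_union, Finset.inf_map, Finset.inf_map]
  rfl

theorem type2_incremental_update {n m t l : ℕ}
    (A : Matrix (Fin n) (Fin m) Bool) (B : Matrix (Fin n) (Fin l) Bool)
    (E : Matrix (Fin t) (Fin m) Bool) (F : Matrix (Fin t) (Fin l) Bool) :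
    bodot (Matrix.fromBlocks A B E F) (Matrix.fromBlocks A B E F)ᵀ =
      minf
        (Matrix.fromBlocks (bodot A Aᵀ) (mone (Fin n) (Fin t))
          (mone (Fin t) (Fin n)) (mone (Fin t) (Fin t)))
        (Matrix.fromBlocks (bodot B Bᵀ)
          (bodot (Matrix.fromCols A B) (Matrix.fromCols E F)ᵀ)
          (bodot (Matrix.fromCols E F) (Matrix.fromCols A B)ᵀ)
          (bodot (Matrix.fromCols E F) (Matrix.fromCols E F)ᵀ)) := by
  funext i j
  cases i <;> cases j <;>
    simp [bodot, minf, mone, Matrix.fromBlocks, Matrix.fromCols, inf_sum_type,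
      Function.comp_def, Bool.and_comm]
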